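/- The polynomial map f : ℂ³ → ℂ⁴ defined by f(t2, t4, t6) = (t2, t4 − (1/16)·t2², t6 − (5/24)·t2·t4 + (5/3456)·t2³, (7/110592)·t2⁴ − (1/8)·t2·t6 + (7/384)·t2²·t4 − (1/16)·t4²) is injective, and its image equals {(a, b, c, d) ∈ ℂ⁴ : d = −(1/2048)·a⁴ − (1/8)·a·c − (1/64)·a²·b − (1/16)·b²}. Hence f is a bijection from ℂ³ onto this set. -/
import Mathlib


/-- The base change map of the case A₅−B₃−D₅, in flat coordinates: it is injective
with image cut out by d = −(1/2048)a⁴ − (1/8)ac − (1/64)a²b − (1/16)b², hence a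
bijection onto that set. -/
theorem stmt_18 :
    Function.Injective (fun t : ℂ × ℂ × ℂ =>
      ((t.1, t.2.1 - (1/16) * t.1 ^ 2,
        t.2.2 - (5/24) * t.1 * t.2.1 + (5/3456) * t.1 ^ 3,
        (7/110592) * t.1 ^ 4 - (1/8) * t.1 * t.2.2 + (7/384) * t.1 ^ 2 * t.2.1
          - (1/16) * t.2.1 ^ 2) : ℂ × ℂ × ℂ × ℂ)) ∧
    Set.range (fun t : ℂ × ℂ × ℂ =>
      ((t.1, t.2.1 - (1/16) * t.1 ^ 2,
        t.2.2 - (5/24) * t.1 * t.2.1 + (5/3456) * t.1 ^ 3,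
        (7/110592) * t.1 ^ 4 - (1/8) * t.1 * t.2.2 + (7/384) * t.1 ^ 2 * t.2.1
          - (1/16) * t.2.1 ^ 2) : ℂ × ℂ × ℂ × ℂ)) =
      {p : ℂ × ℂ × ℂ × ℂ | p.2.2.2 =
        -(1/2048) * p.1 ^ 4 - (1/8) * p.1 * p.2.2.1 - (1/64) * p.1 ^ 2 * p.2.1
          - (1/16) * p.2.1 ^ 2} := by
  constructor
  · rintro ⟨a, b, c⟩ ⟨a', b', c'⟩ h
    simp only [Prod.mk.injEq] at h
    obtain ⟨h1, h2, h3, -⟩ := h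
    subst h1
    have hb : b = b' := by linear_combination h2
    subst hb
    have hc : c = c' := by linear_combination h3
    subst hc
    rfl
  · ext ⟨a, b, c, d⟩
    simp only [Set.mem_range, Set.mem_setOf_eq, Prod.mk.injEq]
    constructor
    · rintro ⟨⟨x, y, z⟩, h⟩
      simp only [Prod.mk.injEq] at h
      obtain ⟨h1, h2, h3, h4⟩ := h
      subst h1 h2 h3 h4
      ring
    · intro h
      refine ⟨⟨a, b + (1/16) * a ^ 2, c + (5/24) * a * (b + (1/16) * a ^ 2)
        - (5/3456) * a ^ 3⟩, ?_⟩
      simp only [Prod.mk.injEq, true_and]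
      refine ⟨by ring, by ring, ?_⟩
      linear_combination -h
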